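/- For every 0 < α < 1 and every t ∈ ℝ, the function E_α is differentiable at t and its derivative satisfies (d/dt) E_α(t) = (1/α) E_{α,α}(t). -/

import Mathlib

open Real Set

/-- Two-parameter Mittag-Leffler function of a real argument; terms at poles of Γ
are interpreted as 0 (in Lean, division by Γ = 0 gives 0). -/
noncomputable def mittagLeffler (α σ x : ℝ) : ℝ :=
  ∑' k : ℕ, x ^ k / Real.Gamma (α * (k : ℝ) + σ)

/-- Gamma grows faster than any geometric sequence along `α * k + 1`. -/
lemma gamma_geom_growth (α : ℝ) (hα : 0 < α) (S : ℝ) :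
    ∀ᶠ k : ℕ in Filter.atTop, S ^ k ≤ Real.Gamma (α * k + 1) := by
  set T : ℝ := max |S| 1 with hTdef
  have hT1 : (1 : ℝ) ≤ T := le_max_right _ _
  have hT0 : (0 : ℝ) < T := lt_of_lt_of_le one_pos hT1
  set B : ℝ := T ^ (1 / α) with hBdef
  have hB1 : (1 : ℝ) ≤ B := Real.one_le_rpow hT1 (by positivity)
  have hB0 : (0 : ℝ) < B := lt_of_lt_of_le one_pos hB1
  -- eventually B ^ (n + 2) ≤ n !
  have hev : ∀ᶠ n : ℕ in Filter.atTop, B ^ (n + 2) ≤ (n.factorial : ℝ) := by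
    have h0 : Filter.Tendsto (fun n : ℕ => B ^ 2 * (B ^ n / (n.factorial : ℝ)))
        Filter.atTop (nhds 0) := by
      simpa using (FloorSemiring.tendsto_pow_div_factorial_atTop (K := ℝ) B).const_mul (B ^ 2)
    filter_upwards [h0.eventually_le_const (by norm_num : (0:ℝ) < 1)] with n hn
    have hfac : (0 : ℝ) < (n.factorial : ℝ) := by positivity
    have : B ^ (n + 2) / (n.factorial : ℝ) ≤ 1 := by
      calc B ^ (n + 2) / (n.factorial : ℝ) = B ^ 2 * (B ^ n / (n.factorial : ℝ)) := by ring
        _ ≤ 1 := hn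
    calc B ^ (n + 2) = B ^ (n + 2) / (n.factorial : ℝ) * (n.factorial : ℝ) := by field_simp
      _ ≤ 1 * (n.factorial : ℝ) := by exact mul_le_mul_of_nonneg_right this hfac.le
      _ = (n.factorial : ℝ) := one_mul _
  obtain ⟨n0, hn0⟩ := Filter.eventually_atTop.1 hev
  have hm : Filter.Tendsto (fun k : ℕ => ⌊α * k⌋₊) Filter.atTop Filter.atTop :=
    tendsto_nat_floor_atTop.comp (Filter.Tendsto.const_mul_atTop hα tendsto_natCast_atTop_atTop)
  filter_upwards [hm.eventually_ge_atTop (n0 + 3)] with k hk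
  set m : ℕ := ⌊α * k⌋₊ with hmdef
  have hm3 : 3 ≤ m := le_trans (by omega) hk
  have hαk0 : (0 : ℝ) ≤ α * k := by positivity
  have hmle : (m : ℝ) ≤ α * k := Nat.floor_le hαk0
  have hltm : α * k < m + 1 := Nat.lt_floor_add_one _
  have hm3' : (3 : ℝ) ≤ (m : ℝ) := by exact_mod_cast hm3
  -- chain
  have step1 : S ^ k ≤ T ^ k := by
    calc S ^ k ≤ |S ^ k| := le_abs_self _
      _ = |S| ^ k := abs_pow S k
      _ ≤ T ^ k := pow_le_pow_left₀ (abs_nonneg S) (le_max_left _ _) k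
  have step2 : T ^ k ≤ B ^ (m + 1) := by
    have h1 : T ^ k = B ^ (α * k : ℝ) := by
      rw [hBdef, ← Real.rpow_mul hT0.le]
      rw [show (1 / α) * (α * k) = (k : ℝ) by field_simp]
      rw [Real.rpow_natCast]
    have h2 : B ^ (α * k : ℝ) ≤ B ^ ((m : ℝ) + 1) :=
      Real.rpow_le_rpow_of_exponent_le hB1 hltm.le
    have h3 : B ^ ((m : ℝ) + 1) = B ^ (m + 1) := by
      rw [show ((m : ℝ) + 1) = ((m + 1 : ℕ) : ℝ) by push_cast; ring, Real.rpow_natCast]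
    rw [h1]; rw [← h3]; exact h2
  have step3 : B ^ (m + 1) ≤ ((m - 1).factorial : ℝ) := by
    have : B ^ ((m - 1) + 2) ≤ ((m - 1).factorial : ℝ) := hn0 (m - 1) (by omega)
    rwa [show (m - 1) + 2 = m + 1 by omega] at this
  have step4 : ((m - 1).factorial : ℝ) = Real.Gamma m := by
    rw [show (m : ℝ) = ((m - 1 : ℕ) : ℝ) + 1 by
      have : 1 ≤ m := by omega
      push_cast [Nat.cast_sub this]; ring]
    rw [Real.Gamma_nat_eq_factorial]
  have step5 : Real.Gamma m ≤ Real.Gamma (α * k + 1) := by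
    rcases eq_or_lt_of_le (show (m : ℝ) ≤ α * k + 1 by linarith) with h | h
    · rw [h]
    · exact le_of_lt (Real.Gamma_strictMonoOn_Ici (by simpa using by linarith : (m:ℝ) ∈ Ici 2)
        (by simp only [mem_Ici]; linarith) h)
  calc S ^ k ≤ T ^ k := step1
    _ ≤ B ^ (m + 1) := step2
    _ ≤ ((m - 1).factorial : ℝ) := step3
    _ = Real.Gamma m := step4
    _ ≤ Real.Gamma (α * k + 1) := step5

/-- Summability of the dominating series. -/
lemma ml_summable_bound (α R : ℝ) (hα : 0 < α) (hR : 1 ≤ R) :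
    Summable (fun k : ℕ => ((k : ℝ) + 1) * R ^ k / Real.Gamma (α * k + 1)) := by
  have hgeom : Summable (fun k : ℕ => ((k : ℝ) + 1) * (1 / 2 : ℝ) ^ k) := by
    have h1 : Summable (fun k : ℕ => (k : ℝ) ^ 1 * (1 / 2 : ℝ) ^ k) :=
      summable_pow_mul_geometric_of_norm_lt_one 1 (by rw [norm_eq_abs, abs_lt]; constructor <;> norm_num)
    have h2 : Summable (fun k : ℕ => (1 / 2 : ℝ) ^ k) :=
      summable_geometric_of_lt_one (by norm_num) (by norm_num)
    simpa [add_mul, pow_one] using h1.add h2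
  apply summable_of_isBigO_nat hgeom
  rw [Asymptotics.isBigO_iff]
  refine ⟨1, ?_⟩
  filter_upwards [gamma_geom_growth α hα (2 * R)] with k hk
  have hΓpos : 0 < Real.Gamma (α * k + 1) := Real.Gamma_pos_of_pos (by positivity)
  have h2R : (0 : ℝ) < (2 * R) ^ k := by positivity
  have hterm : ((k : ℝ) + 1) * R ^ k / Real.Gamma (α * k + 1)
      ≤ ((k : ℝ) + 1) * (1 / 2 : ℝ) ^ k := by
    have h1 : ((k : ℝ) + 1) * R ^ k / Real.Gamma (α * k + 1)
        ≤ ((k : ℝ) + 1) * R ^ k / (2 * R) ^ k := by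
      exact div_le_div_of_nonneg_left (by positivity) h2R hk
    have h2 : ((k : ℝ) + 1) * R ^ k / (2 * R) ^ k = ((k : ℝ) + 1) * (1 / 2 : ℝ) ^ k := by
      rw [mul_pow]
      have hRk : (R : ℝ) ^ k ≠ 0 := by positivity
      field_simp
      rw [← mul_pow]; norm_num
    linarith [h1, h2.le, h2.ge]
  have hnn : 0 ≤ ((k : ℝ) + 1) * R ^ k / Real.Gamma (α * k + 1) := by positivity
  rw [norm_eq_abs, norm_eq_abs, abs_of_nonneg hnn, abs_of_nonneg (by positivity), one_mul]
  exact hterm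

theorem mittagLeffler_hasDerivAt (α t : ℝ) (hα0 : 0 < α) (hα1 : α < 1) :
    HasDerivAt (fun s : ℝ => mittagLeffler α 1 s) ((1 / α) * mittagLeffler α α t) t := by
  set R : ℝ := |t| + 1 with hRdef
  have hR1 : (1 : ℝ) ≤ R := by have := abs_nonneg t; rw [hRdef]; linarith
  have hR0 : (0 : ℝ) < R := lt_of_lt_of_le one_pos hR1
  set u : ℕ → ℝ := fun k => ((k : ℝ) + 1) * R ^ k / Real.Gamma (α * k + 1) with hudef
  have hu : Summable u := ml_summable_bound α R hα0 hR1
  set g : ℕ → ℝ → ℝ := fun k y => y ^ k / Real.Gamma (α * k + 1) with hgdef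
  set g' : ℕ → ℝ → ℝ := fun k y => (k : ℝ) * y ^ (k - 1) / Real.Gamma (α * k + 1) with hg'def
  have hΓpos : ∀ k : ℕ, 0 < Real.Gamma (α * k + 1) := fun k =>
    Real.Gamma_pos_of_pos (by positivity)
  have hmem : t ∈ Metric.ball (0 : ℝ) R := by
    simp only [Metric.mem_ball, dist_zero_right, norm_eq_abs]; linarith
  have hg : ∀ (k : ℕ) (y : ℝ), y ∈ Metric.ball (0 : ℝ) R → HasDerivAt (g k) (g' k y) y :=
    fun k y _ => (hasDerivAt_pow k y).div_const _
  have hg' : ∀ (k : ℕ) (y : ℝ), y ∈ Metric.ball (0 : ℝ) R → ‖g' k y‖ ≤ u k := by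
    intro k y hy
    have hyR : |y| ≤ R := by
      simp only [Metric.mem_ball, dist_zero_right, norm_eq_abs] at hy; linarith
    have hnum : (k : ℝ) * |y| ^ (k - 1) ≤ ((k : ℝ) + 1) * R ^ k := by
      have h1 : |y| ^ (k - 1) ≤ R ^ (k - 1) := pow_le_pow_left₀ (abs_nonneg y) hyR _
      have h2 : R ^ (k - 1) ≤ R ^ k := pow_le_pow_right₀ hR1 (Nat.sub_le k 1)
      have h3 : (k : ℝ) ≤ (k : ℝ) + 1 := by linarith
      have := mul_le_mul h3 (h1.trans h2) (by positivity) (by positivity)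
      exact this
    have : ‖g' k y‖ = (k : ℝ) * |y| ^ (k - 1) / Real.Gamma (α * k + 1) := by
      simp only [hg'def, norm_eq_abs, abs_div, abs_mul, abs_pow, Nat.abs_cast,
        abs_of_pos (hΓpos k)]
    rw [this]
    exact div_le_div_of_nonneg_right hnum (hΓpos k).le
  have hg0 : Summable (fun k => g k t) := by
    apply Summable.of_norm_bounded hu
    intro k
    have hnum : |t| ^ k ≤ ((k : ℝ) + 1) * R ^ k := by
      have h1 : |t| ^ k ≤ R ^ k := pow_le_pow_left₀ (abs_nonneg t) (by linarith) k
      have h2 : R ^ k ≤ ((k : ℝ) + 1) * R ^ k := by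
        nlinarith [pow_pos hR0 k, Nat.cast_nonneg (α := ℝ) k]
      linarith
    have : ‖g k t‖ = |t| ^ k / Real.Gamma (α * k + 1) := by
      simp [hgdef, abs_div, abs_pow, abs_of_pos (hΓpos k)]
    rw [this]
    exact div_le_div_of_nonneg_right hnum (hΓpos k).le
  have key := hasDerivAt_tsum_of_isPreconnected hu Metric.isOpen_ball
    (convex_ball (0:ℝ) R).isPreconnected hg hg' hmem hg0 hmem
  have hsum' : Summable (fun k => g' k t) :=
    Summable.of_norm_bounded hu (fun k => hg' k t hmem)
  -- identify the sum of derivatives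
  have hval : ∑' k : ℕ, g' k t = (1 / α) * mittagLeffler α α t := by
    rw [Summable.tsum_eq_zero_add hsum']
    have hz : g' 0 t = 0 := by simp [hg'def]
    have hterm : ∀ k : ℕ, g' (k + 1) t = (1 / α) * (t ^ k / Real.Gamma (α * k + α)) := by
      intro k
      have hpos : (0 : ℝ) < α * k + α := by positivity
      have hΓ : Real.Gamma (α * ((k : ℝ) + 1) + 1) = (α * k + α) * Real.Gamma (α * k + α) := by
        rw [show α * ((k : ℝ) + 1) + 1 = (α * k + α) + 1 by ring, Real.Gamma_add_one hpos.ne']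
      have hΓne : Real.Gamma (α * k + α) ≠ 0 := (Real.Gamma_pos_of_pos hpos).ne'
      simp only [hg'def, Nat.add_sub_cancel]
      push_cast
      rw [hΓ]
      have hk1 : ((k : ℝ) + 1) ≠ 0 := by positivity
      field_simp
    simp only [hz, zero_add]
    rw [tsum_congr hterm, tsum_mul_left]
    rfl
  rw [← hval]
  exact key
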